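/- Let A be a ring with Jacobson radical J such that A/J is semisimple and J^3 = 0. Let P be a projective left A-module and M a submodule of JP. Then M decomposes as M = N ⊕ X ⊕ Y, where X is a semisimple direct summand of JP, Y is a semisimple direct summand of J^2 P, and N is a submodule containing no simple direct summand. -/
import Mathlib


open CategoryTheory

noncomputable section

instance (A : Type) [Ring A] : HasExt.{1} (ModuleCat.{0} A) := by
  letI := HasDerivedCategory.standard (ModuleCat.{0} A)
  exact hasExt_of_hasDerivedCategory _

/-- The Jacobson radical of the ring `A`, as a two-sided ideal. -/
def jrad (A : Type) [Ring A] : TwoSidedIdeal A := TwoSidedIdeal.jacobson ⊥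

/-- `A/J` is a semisimple ring. -/
def SemisimpleModJ (A : Type) [Ring A] : Prop :=
  IsSemisimpleRing (jrad A).ringCon.Quotient

/-- The Jacobson radical satisfies `J ^ 3 = 0`. -/
def JCubeZero (A : Type) [Ring A] : Prop :=
  ∀ x y z : A, x ∈ jrad A → y ∈ jrad A → z ∈ jrad A → x * y * z = 0

/-- `A` is semiprimary: `A/J` is semisimple and the Jacobson radical `J` is nilpotent. -/
def IsSemiprimary (A : Type) [Ring A] : Prop :=
  SemisimpleModJ A ∧
    ∃ n : ℕ, ∀ x : Fin n → A, (∀ i, x i ∈ jrad A) → (List.ofFn x).prod = 0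

/-- `A/J` as a left `A`-module, an object of `ModuleCat A`. -/
def AmodJ (A : Type) [Ring A] : ModuleCat.{0} A :=
  ModuleCat.of A (A ⧸ (jrad A).asIdeal)

/-- The submodule `J·N`, for `J` the Jacobson radical of `A` and `N` a submodule of `M`. -/
def jSmul (A : Type) [Ring A] {M : Type} [AddCommGroup M] [Module A M]
    (N : Submodule A M) : Submodule A M :=
  Submodule.span A {y | ∃ x ∈ jrad A, ∃ m ∈ N, y = x • m}

/-- `M` has projective dimension at most `n`, characterized by vanishing of
`Ext^k(M, -)` for `k > n`. -/
def projDimLE (A : Type) [Ring A] (M : ModuleCat.{0} A) (n : ℕ) : Prop :=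
  ∀ (N : ModuleCat.{0} A) (k : ℕ), n < k → Subsingleton (Abelian.Ext M N k)

/-- The projective dimension of `M`, valued in `ℕ∞` (infinite if no bound exists). -/
def projDim (A : Type) [Ring A] (M : ModuleCat.{0} A) : ℕ∞ :=
  sInf {e : ℕ∞ | ∃ n : ℕ, e = n ∧ projDimLE A M n}

/-- `N` has injective dimension at most `n`, characterized by vanishing of
`Ext^k(-, N)` for `k > n`. -/
def injDimLE (A : Type) [Ring A] (N : ModuleCat.{0} A) (n : ℕ) : Prop :=
  ∀ (M : ModuleCat.{0} A) (k : ℕ), n < k → Subsingleton (Abelian.Ext M N k)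

/-- The injective dimension of `N`, valued in `ℕ∞`. -/
def injDim (A : Type) [Ring A] (N : ModuleCat.{0} A) : ℕ∞ :=
  sInf {e : ℕ∞ | ∃ n : ℕ, e = n ∧ injDimLE A N n}

/-- The (left) global dimension of `A`: the supremum of projective dimensions of
all left `A`-modules. -/
def globalDim (A : Type) [Ring A] : ℕ∞ :=
  ⨆ M : ModuleCat.{0} A, projDim A M

/-- `N` is the (first) syzygy of `M`: `N` is isomorphic to the kernel of a
projective cover `P → M` (a surjection from a projective module with superfluous
kernel, i.e. kernel contained in `J·P`). -/
def IsSyzygy (A : Type) [Ring A] (M N : ModuleCat.{0} A) : Prop :=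
  ∃ (P : ModuleCat.{0} A) (f : P →ₗ[A] M), Module.Projective A P ∧
    Function.Surjective f ∧ LinearMap.ker f ≤ jSmul A (⊤ : Submodule A P) ∧
    Nonempty (N ≃ₗ[A] LinearMap.ker f)

/-- `N` is the `n`-th syzygy `Ω^n M` of `M` in its minimal projective resolution. -/
def IsNthSyzygy (A : Type) [Ring A] : ℕ → ModuleCat.{0} A → ModuleCat.{0} A → Prop
  | 0, M, N => Nonempty (M ≃ₗ[A] N)
  | n + 1, M, N => ∃ K : ModuleCat.{0} A, IsNthSyzygy A n M K ∧ IsSyzygy A K N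

/-- `S` is (isomorphic to) a direct summand of the module `W`. -/
def IsDirectSummandOf (A : Type) [Ring A] (S W : ModuleCat.{0} A) : Prop :=
  ∃ U V : Submodule A W, IsCompl U V ∧ Nonempty (S ≃ₗ[A] U)

/-- The submodule `X` is a direct summand of the submodule `W` (inside a common
ambient module). -/
def IsSummandIn (A : Type) [Ring A] {P : Type} [AddCommGroup P] [Module A P]
    (X W : Submodule A P) : Prop :=
  X ≤ W ∧ ∃ C ≤ W, X ⊓ C = ⊥ ∧ X ⊔ C = W

/-- The module `N` (a submodule of an ambient module) has no simple direct summand. -/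
def NoSimpleSummand (A : Type) [Ring A] {P : Type} [AddCommGroup P] [Module A P]
    (N : Submodule A P) : Prop :=
  ¬ ∃ S : Submodule A P, IsSimpleModule A S ∧ IsSummandIn A S N

/-- The order relation on simple modules: `S ⪯ T` iff `S` is a direct summand of
some syzygy `Ω^m T`. -/
def Preceq (A : Type) [Ring A] (S T : ModuleCat.{0} A) : Prop :=
  ∃ (m : ℕ) (W : ModuleCat.{0} A), IsNthSyzygy A m T W ∧ IsDirectSummandOf A S W

/-- `Ext_A^n(S, S) = 0` for every simple `A`-module `S` and every `n ≥ m`. -/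
def ExtSelfVanishes (A : Type) [Ring A] (m : ℕ) : Prop :=
  ∀ S : ModuleCat.{0} A, IsSimpleModule A S →
    ∀ n : ℕ, m ≤ n → Subsingleton (Abelian.Ext S S n)

/-- The Yoneda ring `E = ⊕ₙ Ext^n(A/J, A/J)` is generated in finite degrees:
there is `s` such that every homogeneous element of degree `n > s` is a sum of
Yoneda products of homogeneous elements of positive degrees `< n`. -/
def YonedaGeneratedInFiniteDegrees (A : Type) [Ring A] : Prop :=
  ∃ s : ℕ, ∀ n : ℕ, s < n → ∀ e : Abelian.Ext (AmodJ A) (AmodJ A) n,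
    e ∈ AddSubgroup.closure {x : Abelian.Ext (AmodJ A) (AmodJ A) n |
      ∃ (i j : ℕ) (h : i + j = n) (_ : 0 < i) (_ : 0 < j)
        (a : Abelian.Ext (AmodJ A) (AmodJ A) i)
        (b : Abelian.Ext (AmodJ A) (AmodJ A) j), x = a.comp b h}

/-- The data of the canonical sequence `(M₀ = S, M₁, M₂, ...)` associated to a
simple module `S` over a ring with `J³ = 0`: for each `n`, `P n` is a projective
cover of `M n`, and its kernel (the syzygy `Ω M_n`) decomposes as
`M_{n+1} ⊕ Y_{n+1}`, where `Y_{n+1}` is a direct summand of `J²·P n` and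
`M_{n+1} ∩ J²·P n = J·M_{n+1}`. -/
structure AssocSeqData (A : Type) [Ring A] (S : ModuleCat.{0} A) where
  M : ℕ → ModuleCat.{0} A
  iso0 : Nonempty (M 0 ≃ₗ[A] S)
  P : ℕ → ModuleCat.{0} A
  proj : ∀ n, Module.Projective A (P n)
  π : ∀ n, P n →ₗ[A] M n
  surj : ∀ n, Function.Surjective (π n)
  cover : ∀ n, LinearMap.ker (π n) ≤ jSmul A (⊤ : Submodule A (P n))
  Msub : ∀ n, Submodule A (P n)
  Ysub : ∀ n, Submodule A (P n)
  isoM : ∀ n, Nonempty (M (n + 1) ≃ₗ[A] Msub n)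
  indep : ∀ n, Msub n ⊓ Ysub n = ⊥
  sup_eq : ∀ n, Msub n ⊔ Ysub n = LinearMap.ker (π n)
  Y_summand : ∀ n, IsSummandIn A (Ysub n) (jSmul A (jSmul A (⊤ : Submodule A (P n))))
  M_cap : ∀ n, Msub n ⊓ jSmul A (jSmul A (⊤ : Submodule A (P n))) = jSmul A (Msub n)

/-- The iterated Yoneda product `eₙ · ... · e₂ · e₁ · 1` of classes
`eᵢ ∈ Ext^1(S_{i-1}, S_i)`. -/
def extChain (A : Type) [Ring A] (S : ℕ → ModuleCat.{0} A)
    (e : ∀ i : ℕ, Abelian.Ext (S i) (S (i + 1)) 1) :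
    ∀ n : ℕ, Abelian.Ext (S 0) (S n) n
  | 0 => Abelian.Ext.mk₀ (𝟙 (S 0))
  | n + 1 => (extChain A S e n).comp (e n) rfl

/-- The iterated Yoneda product `eₙ · ... · e₁ · f` where `f ∈ Ext^0(S, A/J)` and
`eᵢ ∈ Ext^1(A/J, A/J)`. -/
def extChainFrom (A : Type) [Ring A] {S : ModuleCat.{0} A}
    (f : Abelian.Ext S (AmodJ A) 0)
    (e : ℕ → Abelian.Ext (AmodJ A) (AmodJ A) 1) :
    ∀ n : ℕ, Abelian.Ext S (AmodJ A) n
  | 0 => f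
  | n + 1 => (extChainFrom A f e n).comp (e n) rfl

section StmtSevenAux

variable {A : Type} [Ring A]

section Basic
variable {P : Type} [AddCommGroup P] [Module A P]

lemma jSmul_le (N : Submodule A P) : jSmul A N ≤ N :=
  Submodule.span_le.2 (by rintro y ⟨x, hx, m, hm, rfl⟩; exact N.smul_mem x hm)

lemma jSmul_mono {N N' : Submodule A P} (h : N ≤ N') : jSmul A N ≤ jSmul A N' :=
  Submodule.span_mono (by rintro y ⟨x, hx, m, hm, rfl⟩; exact ⟨x, hx, m, h hm, rfl⟩)

lemma smul_mem_jSmul {N : Submodule A P} {x : A} (hx : x ∈ jrad A) {m : P} (hm : m ∈ N) :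
    x • m ∈ jSmul A N :=
  Submodule.subset_span ⟨x, hx, m, hm, rfl⟩

lemma jcube_aux (h3 : JCubeZero A) {q : P} (hq : q ∈ jSmul A (⊤ : Submodule A P)) :
    ∀ a b : A, a ∈ jrad A → b ∈ jrad A → (a * b) • q = 0 := by
  induction hq using Submodule.span_induction with
  | mem y hy =>
    obtain ⟨x, hx, m, -, rfl⟩ := hy
    intro a b ha hb
    rw [smul_smul, h3 a b x ha hb hx, zero_smul]
  | zero => intro a b _ _; rw [smul_zero]
  | add y z _ _ ihy ihz =>
    intro a b ha hb
    rw [smul_add, ihy a b ha hb, ihz a b ha hb, add_zero]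
  | smul r y _ ih =>
    intro a b ha hb
    rw [smul_smul, mul_assoc]
    exact ih a (b * r) ha (TwoSidedIdeal.mul_mem_right _ _ _ hb)

lemma j2_ann (h3 : JCubeZero A) {m : P}
    (hm : m ∈ jSmul A (jSmul A (⊤ : Submodule A P))) :
    ∀ x ∈ jrad A, x • m = 0 := by
  induction hm using Submodule.span_induction with
  | mem y hy =>
    obtain ⟨z, hz, q, hq, rfl⟩ := hy
    intro x hx
    rw [smul_smul]
    exact jcube_aux h3 hq x z hx hz
  | zero => intro x _; rw [smul_zero]
  | add y z _ _ ihy ihz =>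
    intro x hx
    rw [smul_add, ihy x hx, ihz x hx, add_zero]
  | smul r y _ ih =>
    intro x hx
    rw [smul_smul]
    exact ih (x * r) (TwoSidedIdeal.mul_mem_right _ _ _ hx)

/-- The set of elements of `P` annihilated by the Jacobson radical. -/
def annJ (A : Type) [Ring A] (P : Type) [AddCommGroup P] [Module A P] : Submodule A P where
  carrier := {p | ∀ x ∈ jrad A, x • p = 0}
  add_mem' := by
    intro a b ha hb x hx
    rw [smul_add, ha x hx, hb x hx, add_zero]
  zero_mem' := fun x _ => smul_zero x
  smul_mem' := by
    intro r p hp x hx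
    rw [smul_smul]
    exact hp (x * r) (TwoSidedIdeal.mul_mem_right _ _ _ hx)

lemma mem_annJ {p : P} : p ∈ annJ A P ↔ ∀ x ∈ jrad A, x • p = 0 := Iff.rfl

end Basic

/-- A module annihilated by the Jacobson radical is semisimple. -/
lemma isSemisimpleModule_of_annJ (hss : SemisimpleModJ A)
    (V : Type) [AddCommGroup V] [Module A V]
    (hann : ∀ x ∈ jrad A, ∀ v : V, x • v = 0) : IsSemisimpleModule A V := by
  letI : SMul (jrad A).ringCon.Quotient V :=
    ⟨fun r v => Quotient.liftOn' r (fun a => a • v) (by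
      intro a b hab
      have hmem : a - b ∈ jrad A := (TwoSidedIdeal.rel_iff _ a b).1 hab
      have h0 := hann _ hmem v
      rw [sub_smul, sub_eq_zero] at h0
      exact h0)⟩
  have hsurj : Function.Surjective (jrad A).ringCon.mk' :=
    fun q => Quotient.inductionOn' q (fun a => ⟨a, rfl⟩)
  letI : Module (jrad A).ringCon.Quotient V :=
    Function.Surjective.moduleLeft (jrad A).ringCon.mk' hsurj (fun _ _ => rfl)
  haveI : RingHomSurjective (jrad A).ringCon.mk' := ⟨hsurj⟩
  haveI : IsSemisimpleRing (jrad A).ringCon.Quotient := hss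
  let l : V →ₛₗ[(jrad A).ringCon.mk'] V :=
    { toFun := id
      map_add' := fun _ _ => rfl
      map_smul' := fun _ _ => rfl }
  exact (l.isSemisimpleModule_iff_of_bijective Function.bijective_id).2 inferInstance

variable {P : Type} [AddCommGroup P] [Module A P]

lemma isSemisimpleModule_of_le_annJ (hss : SemisimpleModJ A)
    {W : Submodule A P} (hW : W ≤ annJ A P) : IsSemisimpleModule A W := by
  apply isSemisimpleModule_of_annJ hss
  intro x hx v
  ext
  exact hW v.2 x hx

/-- Relative complement lemma. -/
lemma complement_lemma (hss : SemisimpleModJ A)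
    {K U W : Submodule A P} (hKU : K ≤ U) (hUW : U ≤ W)
    (hJW : ∀ x ∈ jrad A, ∀ w ∈ W, x • w ∈ K) :
    ∃ C, K ≤ C ∧ C ≤ W ∧ U ⊓ C = K ∧ U ⊔ C = W := by
  have hKW : K ≤ W := hKU.trans hUW
  set K' : Submodule A W := K.comap W.subtype with hK'
  set U' : Submodule A W := U.comap W.subtype with hU'
  haveI : IsSemisimpleModule A (W ⧸ K') := by
    apply isSemisimpleModule_of_annJ hss
    intro x hx v
    induction v using Quotient.ind
    rename_i w
    show x • Submodule.Quotient.mk w = 0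
    rw [← Submodule.Quotient.mk_smul, Submodule.Quotient.mk_eq_zero]
    exact hJW x hx (w : P) w.2
  obtain ⟨C'', hC''⟩ := exists_isCompl (Submodule.map K'.mkQ U')
  set C' : Submodule A W := C''.comap K'.mkQ with hC'
  have hKC' : K' ≤ C' := by
    intro k hk
    have : K'.mkQ k = 0 := (Submodule.Quotient.mk_eq_zero K').2 hk
    simp only [hC', Submodule.mem_comap, this]
    exact C''.zero_mem
  have hUC'inf : U' ⊓ C' = K' := by
    apply le_antisymm
    · intro w hw
      have h1 : K'.mkQ w ∈ Submodule.map K'.mkQ U' ⊓ C'' := ⟨⟨w, hw.1, rfl⟩, hw.2⟩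
      rw [hC''.inf_eq_bot] at h1
      simpa [Submodule.Quotient.mk_eq_zero] using h1
    · exact le_inf (Submodule.comap_mono hKU) hKC'
  have hUC'sup : U' ⊔ C' = ⊤ := by
    have hmap : Submodule.map K'.mkQ (U' ⊔ C') = ⊤ := by
      rw [Submodule.map_sup]
      have : Submodule.map K'.mkQ C' = C'' := by
        rw [hC', Submodule.map_comap_eq, Submodule.range_mkQ, top_inf_eq]
      rw [this, hC''.sup_eq_top]
    have := congrArg (Submodule.comap K'.mkQ) hmap
    rwa [Submodule.comap_map_mkQ, Submodule.comap_top, sup_eq_right.2 (hKC'.trans le_sup_right)]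
      at this
  refine ⟨C'.map W.subtype, ?_, ?_, ?_, ?_⟩
  · have : K = K'.map W.subtype := by
      rw [hK', Submodule.map_comap_subtype, inf_eq_right.2 hKW]
    rw [this]
    exact Submodule.map_mono hKC'
  · exact Submodule.map_subtype_le W C'
  · have hUmap : Submodule.map W.subtype U' = U := by
      rw [hU', Submodule.map_comap_subtype, inf_eq_right.2 hUW]
    calc U ⊓ Submodule.map W.subtype C'
        = Submodule.map W.subtype (U' ⊓ C') := by
          rw [Submodule.map_inf _ W.injective_subtype, hUmap]
      _ = Submodule.map W.subtype K' := by rw [hUC'inf]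
      _ = K := by rw [hK', Submodule.map_comap_subtype, inf_eq_right.2 hKW]
  · have hUmap : Submodule.map W.subtype U' = U := by
      rw [hU', Submodule.map_comap_subtype, inf_eq_right.2 hUW]
    calc U ⊔ Submodule.map W.subtype C'
        = Submodule.map W.subtype (U' ⊔ C') := by rw [Submodule.map_sup, hUmap]
      _ = W := by rw [hUC'sup, Submodule.map_top, Submodule.range_subtype]

end StmtSevenAux
section Simple
variable {A : Type} [Ring A] {P : Type} [AddCommGroup P] [Module A P]

lemma jrad_mem_jacobson {x : A} (hx : x ∈ jrad A) :
    x ∈ Ideal.jacobson (⊥ : Ideal A) := by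
  have : x ∈ (jrad A).asIdeal := TwoSidedIdeal.mem_asIdeal.2 hx
  rw [jrad, TwoSidedIdeal.asIdeal_jacobson] at this
  refine Ideal.jacobson_mono ?_ this
  intro y hy
  rw [TwoSidedIdeal.mem_asIdeal, TwoSidedIdeal.mem_bot] at hy
  simpa using hy

lemma simple_le_annJ {S : Submodule A P} (hS : IsSimpleModule A S) : S ≤ annJ A P := by
  haveI := hS
  intro s hs x hx
  by_contra hxs
  have hxsS : x • s ∈ S := S.smul_mem x hs
  have hcomap : Submodule.comap S.subtype (Submodule.span A {x • s}) = ⊤ := by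
    rcases eq_bot_or_eq_top (Submodule.comap S.subtype (Submodule.span A {x • s})) with h | h
    · exfalso
      apply hxs
      have hmem : (⟨x • s, hxsS⟩ : S) ∈
          Submodule.comap S.subtype (Submodule.span A {x • s}) := by
        exact Submodule.mem_span_singleton_self _
      rw [h] at hmem
      simpa using hmem
    · exact h
  have hle : S ≤ Submodule.span A {x • s} := by
    have h2 := congrArg (Submodule.map S.subtype) hcomap
    rw [Submodule.map_comap_subtype, Submodule.map_top, Submodule.range_subtype] at h2
    calc S = S ⊓ Submodule.span A {x • s} := h2.symm
      _ ≤ _ := inf_le_right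
  obtain ⟨a, ha⟩ := Submodule.mem_span_singleton.1 (hle hs)
  have hx' : x ∈ TwoSidedIdeal.jacobson (⊥ : TwoSidedIdeal A) := hx
  obtain ⟨z, hz⟩ := TwoSidedIdeal.mem_jacobson_iff.1 hx' (-a)
  rw [TwoSidedIdeal.mem_bot, sub_eq_zero] at hz
  have hzinv : z * (1 - a * x) = 1 := by
    have h2 : z * (1 - a * x) = z * (-a) * x + z := by noncomm_ring
    rw [h2, hz]
  have h0 : (1 - a * x) • s = 0 := by
    rw [sub_smul, one_smul, mul_smul, ha, sub_self]
  have hs0 : s = 0 := by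
    calc s = (1 : A) • s := (one_smul A s).symm
      _ = (z * (1 - a * x)) • s := by rw [hzinv]
      _ = z • ((1 - a * x) • s) := by rw [mul_smul]
      _ = 0 := by rw [h0, smul_zero]
  exact hxs (by rw [hs0, smul_zero])

end Simple

/-- Decomposition lemma: over a ring with `A/J` semisimple and `J³ = 0`, any
submodule `M` of `J·P` (`P` projective) decomposes as `M = N ⊕ X ⊕ Y` with `X` a
semisimple direct summand of `J·P`, `Y` a semisimple direct summand of `J²·P`,
and `N` containing no simple direct summand. -/
theorem stmt_7 (A : Type) [Ring A] (hss : SemisimpleModJ A) (h3 : JCubeZero A)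
    (P : Type) [AddCommGroup P] [Module A P] (hP : Module.Projective A P)
    (M : Submodule A P) (hM : M ≤ jSmul A (⊤ : Submodule A P)) :
    ∃ N X Y : Submodule A P,
      N ≤ M ∧ X ≤ M ∧ Y ≤ M ∧
      N ⊓ (X ⊔ Y) = ⊥ ∧ X ⊓ Y = ⊥ ∧ N ⊔ X ⊔ Y = M ∧
      IsSemisimpleModule A X ∧ IsSummandIn A X (jSmul A (⊤ : Submodule A P)) ∧
      IsSemisimpleModule A Y ∧
      IsSummandIn A Y (jSmul A (jSmul A (⊤ : Submodule A P))) ∧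
      NoSimpleSummand A N := by
  classical
  set J1 := jSmul A (⊤ : Submodule A P) with hJ1
  set J2 := jSmul A J1 with hJ2def
  have hJ2ann : J2 ≤ annJ A P := fun m hm => j2_ann h3 hm
  set D := M ⊓ J2 with hDdef
  set JM := jSmul A M with hJMdef
  have hJMM : JM ≤ M := jSmul_le M
  have hJMJ2 : JM ≤ J2 := jSmul_mono hM
  have hJMD : JM ≤ D := le_inf hJMM hJMJ2
  have hDJ2 : D ≤ J2 := inf_le_right
  have hDann : D ≤ annJ A P := hDJ2.trans hJ2ann
  obtain ⟨Y, -, hYD, hJMYinf, hJMYsup⟩ :=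
    complement_lemma hss (bot_le : (⊥ : Submodule A P) ≤ JM) hJMD
      (fun x hx w hw => by rw [hDann hw x hx]; exact Submodule.zero_mem ⊥)
  have hYann : Y ≤ annJ A P := hYD.trans hDann
  have hYJ2 : Y ≤ J2 := hYD.trans hDJ2
  obtain ⟨CY, -, hCYJ2, hYCYinf, hYCYsup⟩ :=
    complement_lemma hss (bot_le : (⊥ : Submodule A P) ≤ Y) hYJ2
      (fun x hx w hw => by rw [hJ2ann hw x hx]; exact Submodule.zero_mem ⊥)
  set Soc := M ⊓ annJ A P with hSocdef
  have hDSoc : D ≤ Soc := le_inf inf_le_left hDann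
  have hSocann : Soc ≤ annJ A P := inf_le_right
  obtain ⟨X, -, hXSoc, hDXinf, hDXsup⟩ :=
    complement_lemma hss (bot_le : (⊥ : Submodule A P) ≤ D) hDSoc
      (fun x hx w hw => by rw [hSocann hw x hx]; exact Submodule.zero_mem ⊥)
  have hXM : X ≤ M := hXSoc.trans inf_le_left
  have hXann : X ≤ annJ A P := hXSoc.trans inf_le_right
  have hXJ2 : X ⊓ J2 = ⊥ := by
    rw [eq_bot_iff, ← hDXinf]
    exact le_inf (le_inf (inf_le_left.trans hXM) inf_le_right) inf_le_left
  have hXJ1 : X ≤ J1 := hXM.trans hM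
  obtain ⟨C, hJ2C, hCJ1, hXJ2Cinf, hXJ2Csup⟩ :=
    complement_lemma hss (le_sup_right : J2 ≤ X ⊔ J2) (sup_le hXJ1 (jSmul_le J1))
      (fun x hx w hw => smul_mem_jSmul hx hw)
  have hXCsup : X ⊔ C = J1 := by
    rw [← hXJ2Csup, sup_assoc, sup_eq_right.2 hJ2C]
  have hXCinf : X ⊓ C = ⊥ := by
    rw [eq_bot_iff, ← hXJ2]
    refine le_inf inf_le_left ?_
    calc X ⊓ C ≤ (X ⊔ J2) ⊓ C := inf_le_inf_right C le_sup_left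
      _ = J2 := hXJ2Cinf
  set M1 := M ⊓ C with hM1def
  have hXM1sup : X ⊔ M1 = M := by
    rw [sup_comm, hM1def, inf_sup_assoc_of_le C hXM, sup_comm C X, hXCsup,
      inf_eq_left.2 hM]
  have hXM1inf : X ⊓ M1 = ⊥ := by
    rw [eq_bot_iff, ← hXCinf]
    exact le_inf inf_le_left (inf_le_right.trans inf_le_right)
  have hYM1 : Y ≤ M1 := le_inf (hYD.trans inf_le_left) (hYJ2.trans hJ2C)
  have hJMM1 : JM ≤ M1 := le_inf hJMM (hJMJ2.trans hJ2C)
  obtain ⟨N, hJMN, hNM1, hYJMNinf, hYJMNsup⟩ :=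
    complement_lemma hss (le_sup_right : JM ≤ Y ⊔ JM) (sup_le hYM1 hJMM1)
      (fun x hx w hw => smul_mem_jSmul hx hw.1)
  have hYNsup : Y ⊔ N = M1 := by
    rw [← hYJMNsup, sup_assoc, sup_eq_right.2 hJMN]
  have hYNinf : Y ⊓ N = ⊥ := by
    rw [eq_bot_iff, ← hJMYinf]
    refine le_inf ?_ inf_le_left
    calc Y ⊓ N ≤ (Y ⊔ JM) ⊓ N := inf_le_inf_right N le_sup_left
      _ = JM := hYJMNinf
  have hNM : N ≤ M := hNM1.trans inf_le_left
  have hYM : Y ≤ M := hYD.trans inf_le_left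
  refine ⟨N, X, Y, hNM, hXM, hYM, ?_, ?_, ?_, ?_, ?_, ?_, ?_, ?_⟩
  · have hM1XY : M1 ⊓ (X ⊔ Y) = Y := by
      rw [← inf_sup_assoc_of_le X hYM1, inf_comm M1 X, hXM1inf, bot_sup_eq]
    rw [eq_bot_iff, ← hYNinf]
    refine le_inf ?_ inf_le_left
    calc N ⊓ (X ⊔ Y) ≤ M1 ⊓ (X ⊔ Y) := inf_le_inf_right _ hNM1
      _ = Y := hM1XY
  · rw [eq_bot_iff, ← hXM1inf]
    exact le_inf inf_le_left (inf_le_right.trans hYM1)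
  · rw [sup_comm N X, sup_assoc, sup_comm N Y, hYNsup, hXM1sup]
  · exact isSemisimpleModule_of_le_annJ hss hXann
  · exact ⟨hXJ1, C, hCJ1, hXCinf, hXCsup⟩
  · exact isSemisimpleModule_of_le_annJ hss hYann
  · exact ⟨hYJ2, CY, hCYJ2, hYCYinf, hYCYsup⟩
  · rintro ⟨S, hSsimple, hSN, N', hN'N, hSN'inf, hSN'sup⟩
    have hSann : S ≤ annJ A P := simple_le_annJ hSsimple
    have hSM : S ≤ M := hSN.trans hNM
    have hSSoc : S ≤ Soc := le_inf hSM hSann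
    have hNC : N ≤ C := hNM1.trans inf_le_right
    have hDC : D ≤ C := hDJ2.trans hJ2C
    have hCSoc : C ⊓ Soc = D := by
      rw [← hDXsup, sup_comm D X, ← inf_sup_assoc_of_le X hDC, inf_comm C X,
        hXCinf, bot_sup_eq]
    have hND : N ⊓ D = JM := by
      rw [← hJMYsup, sup_comm JM Y, ← inf_sup_assoc_of_le Y hJMN, inf_comm N Y,
        hYNinf, bot_sup_eq]
    have hSD : S ≤ D := by
      calc S ≤ C ⊓ Soc := le_inf (hSN.trans hNC) hSSoc
        _ = D := hCSoc
    have hSJM : S ≤ JM := by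
      calc S ≤ N ⊓ D := le_inf hSN hSD
        _ = JM := hND
    have hJMN' : JM ≤ N' := by
      rw [hJMdef, jSmul]
      apply Submodule.span_le.2
      rintro y ⟨x, hx, m, hm, rfl⟩
      have hMdecomp : X ⊔ (Y ⊔ (S ⊔ N')) = M := by rw [hSN'sup, hYNsup, hXM1sup]
      have hmm : m ∈ X ⊔ (Y ⊔ (S ⊔ N')) := hMdecomp ▸ hm
      obtain ⟨a, haX, b, hb, rfl⟩ := Submodule.mem_sup.1 hmm
      obtain ⟨c, hcY, d, hd, rfl⟩ := Submodule.mem_sup.1 hb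
      obtain ⟨e, heS, f, hfN', rfl⟩ := Submodule.mem_sup.1 hd
      show x • (a + (c + (e + f))) ∈ N'
      rw [smul_add, smul_add, smul_add, hXann haX x hx, hYann hcY x hx,
        hSann heS x hx, zero_add, zero_add, zero_add]
      exact N'.smul_mem x hfN'
    have hSbot : S = ⊥ := by
      rw [eq_bot_iff, ← hSN'inf]
      exact le_inf le_rfl (hSJM.trans hJMN')
    have hbotS : ¬ IsSimpleModule A (⊥ : Submodule A P) := by
      intro h
      haveI := h
      haveI : Nontrivial (⊥ : Submodule A P) := IsSimpleModule.nontrivial A _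
      obtain ⟨v, hv⟩ := exists_ne (0 : (⊥ : Submodule A P))
      exact hv (Subtype.ext ((Submodule.mem_bot A).1 v.2))
    exact hbotS (hSbot ▸ hSsimple)

end
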